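/- For all real numbers μ, a01, b01, c001: if the simplified moment matrix M1s(μ, a01, b01, c001) is positive semidefinite, then μ ≤ 0. -/

import Mathlib

noncomputable def M1s (μ a01 b01 c001 : ℝ) : Matrix (Fin 9) (Fin 9) ℝ :=
  !![1, 1/2, (4-μ)/6, 1/2, 1/2, (μ+2)/6, (μ+2)/6, 1/2, (1-μ)/6;
     1/2, 1/2, a01, (μ+2)/6, (μ+2)/6, (μ+2)/6, (μ+2)/6, (μ+2)/6, a01-(1-μ)/6;
     (4-μ)/6, a01, (4-μ)/6, 1/2, (1-μ)/6, (μ+2)/6, a01-(1-μ)/6, 1/2, (1-μ)/6;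
     1/2, (μ+2)/6, 1/2, 1/2, b01, (μ+2)/6, c001, 1/2, b01;
     1/2, (μ+2)/6, (1-μ)/6, b01, 1/2, c001, (μ+2)/6, b01, (1-μ)/6;
     (μ+2)/6, (μ+2)/6, (μ+2)/6, (μ+2)/6, c001, (μ+2)/6, c001, (μ+2)/6, c001;
     (μ+2)/6, (μ+2)/6, a01-(1-μ)/6, c001, (μ+2)/6, c001, (μ+2)/6, c001, a01-(1-μ)/6;
     1/2, (μ+2)/6, 1/2, 1/2, b01, (μ+2)/6, c001, 1/2, b01;
     (1-μ)/6, a01-(1-μ)/6, (1-μ)/6, b01, (1-μ)/6, c001, a01-(1-μ)/6, b01, (1-μ)/6]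

theorem stmt3 (μ a01 b01 c001 : ℝ) (h : (M1s μ a01 b01 c001).PosSemidef) :
    μ ≤ 0 := by
  have hv := h.dotProduct_mulVec_nonneg ![1,-1,-1,0,-1,1,1,0,0]
  simp only [M1s, Matrix.mulVec, dotProduct, Fin.sum_univ_succ, Fin.sum_univ_zero,
    Matrix.cons_val_zero, Matrix.cons_val_one, Matrix.head_cons, Matrix.cons_val_succ,
    Matrix.of_apply, Matrix.cons_val', Matrix.empty_val', Matrix.cons_val_fin_one,
    Matrix.head_fin_const, Pi.star_apply, star_trivial] at hv
  linarith
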